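/- Let p, q, r, d be positive integers and f = Σ_{i+j=d} a_{ij} s^i t^j a homogeneous polynomial of degree d in k[s,t]. Then f·(s+t)^r ∈ ⟨s^p, t^q⟩ if and only if for every u with d+r−q+1 ≤ u ≤ p−1, the linear condition Σ_{m+i=u, 0≤m≤r, 0≤i≤d} binomial(r,m) a_{i,d−i} = 0 holds. -/

import Mathlib

open MvPolynomial

/-- `binomial r b` with the convention that it vanishes for `b < 0` (and for `b > r`,
which `Nat.choose` already handles). -/
def ichoose (r : ℕ) (b : ℤ) : ℤ := if b < 0 then 0 else r.choose b.toNat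

lemma fin2_finsupp_eq (e : Fin 2 →₀ ℕ) :
    e = Finsupp.single 0 (e 0) + Finsupp.single 1 (e 1) := by
  ext a; fin_cases a <;> simp

lemma fin2_degree (e : Fin 2 →₀ ℕ) : e.degree = e 0 + e 1 := by
  rw [Finsupp.degree_apply, Finset.sum_subset (Finset.subset_univ _)
    (fun i _ hi => Finsupp.notMem_support_iff.mp hi)]
  exact Fin.sum_univ_two _

lemma fin2_apply0 (u v : ℕ) :
    ((Finsupp.single (0 : Fin 2) u + Finsupp.single 1 v : Fin 2 →₀ ℕ)) 0 = u := by simp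

lemma fin2_apply1 (u v : ℕ) :
    ((Finsupp.single (0 : Fin 2) u + Finsupp.single 1 v : Fin 2 →₀ ℕ)) 1 = v := by simp

lemma fin2_le (m n u v : ℕ) :
    (Finsupp.single (0 : Fin 2) m + Finsupp.single 1 n ≤
      Finsupp.single 0 u + Finsupp.single 1 v) ↔ m ≤ u ∧ n ≤ v := by
  rw [Finsupp.le_def]
  constructor
  · intro h
    exact ⟨by simpa using h 0, by simpa using h 1⟩
  · rintro ⟨h1, h2⟩ a
    fin_cases a <;> simpa

lemma fin2_sub (m n u v : ℕ) :
    (Finsupp.single (0 : Fin 2) u + Finsupp.single 1 v) -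
      (Finsupp.single 0 m + Finsupp.single 1 n) =
      Finsupp.single 0 (u - m) + Finsupp.single 1 (v - n) := by
  ext a; fin_cases a <;> simp [Finsupp.tsub_apply]

lemma ichoose_nonneg (r a b : ℕ) (h : b ≤ a) :
    ichoose r ((a : ℤ) - b) = r.choose (a - b) := by
  have h2 : (a : ℤ) - b = ((a - b : ℕ) : ℤ) := by omega
  rw [h2, ichoose, if_neg (by omega), Int.toNat_natCast]

lemma ichoose_neg (r a b : ℕ) (h : a < b) : ichoose r ((a : ℤ) - b) = 0 := by
  rw [ichoose, if_pos (by omega)]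

lemma key_coeff (k : Type) [Field k] (r d : ℕ) (f : MvPolynomial (Fin 2) k)
    (hf : f.IsHomogeneous d) (u v : ℕ) (huv : u + v = d + r) :
    MvPolynomial.coeff (Finsupp.single 0 u + Finsupp.single 1 v) (f * (X 0 + X 1) ^ r) =
    ∑ i ∈ Finset.range (d + 1), (ichoose r ((u : ℤ) - i) : k) *
       f.coeff (Finsupp.single 0 i + Finsupp.single 1 (d - i)) := by
  have hA0 : ∀ i, d < i →
      f.coeff (Finsupp.single 0 i + Finsupp.single 1 (d - i)) = 0 := by
    intro i hi
    apply hf.coeff_eq_zero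
    rw [fin2_degree, fin2_apply0, fin2_apply1]
    omega
  have h1 : MvPolynomial.coeff (Finsupp.single 0 u + Finsupp.single 1 v) (f * (X 0 + X 1) ^ r)
      = ∑ m ∈ Finset.range (r + 1),
        (if m ≤ u ∧ r - m ≤ v then (r.choose m : k) *
          f.coeff (Finsupp.single 0 (u - m) + Finsupp.single 1 (d - (u - m))) else 0) := by
    rw [add_pow, Finset.mul_sum, MvPolynomial.coeff_sum]
    refine Finset.sum_congr rfl fun m hm => ?_
    have hmr : m ≤ r := by
      simp only [Finset.mem_range] at hm; omega
    have hX : (X (0:Fin 2) : MvPolynomial (Fin 2) k) ^ m * X 1 ^ (r - m) *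
        ((r.choose m : ℕ) : MvPolynomial (Fin 2) k)
        = monomial (Finsupp.single 0 m + Finsupp.single 1 (r - m)) ((r.choose m : k)) := by
      rw [X_pow_eq_monomial, X_pow_eq_monomial, monomial_mul, mul_one,
        ← MvPolynomial.C_eq_coe_nat, mul_comm, C_mul_monomial, mul_one]
    rw [hX, coeff_mul_monomial']
    simp only [fin2_le]
    split_ifs with hc
    · obtain ⟨hc1, hc2⟩ := hc
      rw [fin2_sub]
      have hvd : v - (r - m) = d - (u - m) := by omega
      rw [hvd, mul_comm]
    · rfl
  rw [h1]
  have h2 : ∀ N, r + 1 ≤ N → ∑ m ∈ Finset.range (r + 1),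
        (if m ≤ u ∧ r - m ≤ v then (r.choose m : k) *
          f.coeff (Finsupp.single 0 (u - m) + Finsupp.single 1 (d - (u - m))) else 0)
      = ∑ m ∈ Finset.range N,
        (if m ≤ u ∧ r - m ≤ v then (r.choose m : k) *
          f.coeff (Finsupp.single 0 (u - m) + Finsupp.single 1 (d - (u - m))) else 0) := by
    intro N hN
    apply Finset.sum_subset (by intro x hx; simp only [Finset.mem_range] at hx ⊢; omega)
    intro m _ hm
    simp only [Finset.mem_range, not_lt] at hm
    split_ifs with hc
    · rw [Nat.choose_eq_zero_of_lt (by omega), Nat.cast_zero, zero_mul]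
    · rfl
  rw [h2 (u + r + 1) (by omega)]
  have h3 : ∑ m ∈ Finset.range (u + r + 1),
        (if m ≤ u ∧ r - m ≤ v then (r.choose m : k) *
          f.coeff (Finsupp.single 0 (u - m) + Finsupp.single 1 (d - (u - m))) else 0)
      = ∑ m ∈ Finset.range (u + 1),
        (if m ≤ u ∧ r - m ≤ v then (r.choose m : k) *
          f.coeff (Finsupp.single 0 (u - m) + Finsupp.single 1 (d - (u - m))) else 0) := by
    symm
    apply Finset.sum_subset (by intro x hx; simp only [Finset.mem_range] at hx ⊢; omega)
    intro m _ hm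
    simp only [Finset.mem_range, not_lt] at hm
    rw [if_neg (by omega)]
  rw [h3, ← Finset.sum_range_reflect]
  have h5 : ∀ i ∈ Finset.range (u + 1),
      (if u + 1 - 1 - i ≤ u ∧ r - (u + 1 - 1 - i) ≤ v then (r.choose (u + 1 - 1 - i) : k) *
          f.coeff (Finsupp.single 0 (u - (u + 1 - 1 - i)) +
            Finsupp.single 1 (d - (u - (u + 1 - 1 - i)))) else 0)
      = (ichoose r ((u : ℤ) - i) : k) *
          f.coeff (Finsupp.single 0 i + Finsupp.single 1 (d - i)) := by
    intro i hi
    simp only [Finset.mem_range] at hi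
    have hiu : i ≤ u := by omega
    have e1 : u + 1 - 1 - i = u - i := by omega
    have e2 : u - (u - i) = i := by omega
    rw [e1]
    by_cases hid : i ≤ d
    · rw [if_pos ⟨by omega, by omega⟩, e2, ichoose_nonneg r u i hiu]
      push_cast
      ring
    · rw [if_neg (by omega), hA0 i (by omega), mul_zero]
  rw [Finset.sum_congr rfl h5]
  have h7 : ∑ i ∈ Finset.range (u + 1), (ichoose r ((u : ℤ) - i) : k) *
          f.coeff (Finsupp.single 0 i + Finsupp.single 1 (d - i))
      = ∑ i ∈ Finset.range (u + d + 1), (ichoose r ((u : ℤ) - i) : k) *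
          f.coeff (Finsupp.single 0 i + Finsupp.single 1 (d - i)) := by
    apply Finset.sum_subset (by intro x hx; simp only [Finset.mem_range] at hx ⊢; omega)
    intro i _ hi
    simp only [Finset.mem_range, not_lt] at hi
    rw [ichoose_neg r u i (by omega), Int.cast_zero, zero_mul]
  have h8 : ∑ i ∈ Finset.range (u + d + 1), (ichoose r ((u : ℤ) - i) : k) *
          f.coeff (Finsupp.single 0 i + Finsupp.single 1 (d - i))
      = ∑ i ∈ Finset.range (d + 1), (ichoose r ((u : ℤ) - i) : k) *
          f.coeff (Finsupp.single 0 i + Finsupp.single 1 (d - i)) := by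
    symm
    apply Finset.sum_subset (by intro x hx; simp only [Finset.mem_range] at hx ⊢; omega)
    intro i _ hi
    simp only [Finset.mem_range, not_lt] at hi
    rw [hA0 i (by omega), mul_zero]
  rw [h7, h8]

/-- For a homogeneous `f = Σ_{i+j=d} a_{ij} s^i t^j` of degree `d` in `k[s,t]` (char 0),
`f·(s+t)^r ∈ ⟨s^p, t^q⟩` iff for every `u` with `d+r−q+1 ≤ u ≤ p−1` the linear condition
`Σ_{m+i=u} binomial(r,m)·a_{i,d−i} = 0` holds. -/
theorem stmt_19 (k : Type) [Field k] [CharZero k] (p q r d : ℕ)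
    (hp : 0 < p) (hq : 0 < q) (hr : 0 < r) (hd : 0 < d)
    (f : MvPolynomial (Fin 2) k) (hf : f.IsHomogeneous d) :
    f * (X 0 + X 1) ^ r ∈ Ideal.span {(X 0 : MvPolynomial (Fin 2) k) ^ p, X 1 ^ q} ↔
      ∀ u : ℕ, (d : ℤ) + r - q + 1 ≤ u → u + 1 ≤ p →
        ∑ i ∈ Finset.range (d + 1),
          (ichoose r ((u : ℤ) - i) : k) *
            f.coeff (Finsupp.single 0 i + Finsupp.single 1 (d - i)) = 0 := by
  have hg : (f * (X 0 + X 1) ^ r).IsHomogeneous (d + r) := by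
    have hx : ((X 0 + X 1 : MvPolynomial (Fin 2) k) ^ r).IsHomogeneous r := by
      simpa using (((isHomogeneous_X k (0 : Fin 2)).add (isHomogeneous_X k 1)).pow r)
    exact hf.mul hx
  have hspan : ({(X 0 : MvPolynomial (Fin 2) k) ^ p, X 1 ^ q} : Set (MvPolynomial (Fin 2) k)) =
      (fun s => monomial s (1 : k)) ''
        {Finsupp.single (0 : Fin 2) p, Finsupp.single 1 q} := by
    rw [Set.image_insert_eq, Set.image_singleton, X_pow_eq_monomial, X_pow_eq_monomial]
  rw [hspan, mem_ideal_span_monomial_image]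
  constructor
  · intro h u hu1 hu2
    by_cases hud : u ≤ d + r
    · rw [← key_coeff k r d f hf u (d + r - u) (by omega)]
      by_contra hne
      obtain ⟨si, hsi, hle⟩ := h _ (MvPolynomial.mem_support_iff.mpr hne)
      rcases hsi with rfl | rfl
      · have : p ≤ u := by
          have := Finsupp.single_le_iff.mp hle
          rwa [fin2_apply0] at this
        omega
      · have : q ≤ d + r - u := by
          have := Finsupp.single_le_iff.mp hle
          rwa [fin2_apply1] at this
        omega
    · apply Finset.sum_eq_zero
      intro i hi
      simp only [Finset.mem_range] at hi
      rw [ichoose_nonneg r u i (by omega), Nat.choose_eq_zero_of_lt (by omega)]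
      simp
  · intro h e he
    have hdeg : e.degree = d + r := by
      by_contra hne
      exact (MvPolynomial.mem_support_iff.mp he) (hg.coeff_eq_zero hne)
    rw [fin2_degree] at hdeg
    by_contra h'
    push_neg at h'
    have h0 : ¬ Finsupp.single (0 : Fin 2) p ≤ e := h' _ (Set.mem_insert _ _)
    have h1 : ¬ Finsupp.single (1 : Fin 2) q ≤ e :=
      h' _ (Set.mem_insert_of_mem _ rfl)
    rw [Finsupp.single_le_iff, not_le] at h0 h1
    have hzero := h (e 0) (by omega) (by omega)
    rw [← key_coeff k r d f hf (e 0) (e 1) (by omega), ← fin2_finsupp_eq] at hzero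
    exact MvPolynomial.mem_support_iff.mp he hzero
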